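/- For every real z > 0, the limit as ε → 0⁺ of ( Σ_{n=0}^∞ (z+n)^{−(1+ε)} − 1/ε ) equals −Γ′(z)/Γ(z); that is, lim_{s→1} ( ζ_Hurwitz(s, z) − 1/(s−1) ) = −Γ′(z)/Γ(z), where ζ_Hurwitz(s, z) = Σ_{n=0}^∞ (z+n)^{−s}. -/

import Mathlib

open Filter Topology

namespace HurwitzDigammaAux
open Real


noncomputable def psi (z : ℝ) : ℝ := deriv Real.Gamma z / Real.Gamma z

lemma gdiff {z : ℝ} (hz : 0 < z) : DifferentiableAt ℝ Real.Gamma z :=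
  Real.differentiableAt_Gamma (fun m => by
    have := Nat.cast_nonneg (α := ℝ) m; intro h; rw [h] at hz; linarith)

lemma deriv_gamma_rec {z : ℝ} (hz : 0 < z) :
    deriv Real.Gamma (z + 1) = Real.Gamma z + z * deriv Real.Gamma z := by
  have h1 : HasDerivAt (fun x => Real.Gamma (x + 1)) (deriv Real.Gamma (z + 1)) z := by
    simpa [Function.comp_def] using (HasDerivAt.comp z
      (gdiff (show (0:ℝ) < z + 1 by linarith)).hasDerivAt ((hasDerivAt_id z).add_const 1))
  have h2 : HasDerivAt (fun x => x * Real.Gamma x)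
      (1 * Real.Gamma z + z * deriv Real.Gamma z) z :=
    (hasDerivAt_id z).mul (gdiff hz).hasDerivAt
  have heq : (fun x => Real.Gamma (x + 1)) =ᶠ[𝓝 z] (fun x => x * Real.Gamma x) := by
    filter_upwards [eventually_gt_nhds hz] with x hx
    exact Real.Gamma_add_one (ne_of_gt hx)
  have h3 := h2.congr_of_eventuallyEq heq
  have := h1.unique h3
  linarith [this]

lemma psi_rec {z : ℝ} (hz : 0 < z) : psi (z + 1) = psi z + 1 / z := by
  have hg : Real.Gamma z ≠ 0 := (Real.Gamma_pos_of_pos hz).ne'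
  rw [psi, psi, deriv_gamma_rec hz, Real.Gamma_add_one hz.ne']
  field_simp
  ring

lemma psi_add_nat {z : ℝ} (hz : 0 < z) (N : ℕ) :
    psi (z + N) = psi z + ∑ n ∈ Finset.range N, 1 / (z + n) := by
  induction N with
  | zero => simp
  | succ N ih =>
    have h : z + (N + 1 : ℕ) = (z + N) + 1 := by push_cast; ring
    rw [h, psi_rec (by positivity), ih, Finset.sum_range_succ]
    ring

lemma psi_nat (n : ℕ) : psi (n + 1) = -eulerMascheroniConstant + harmonic n := by
  have h : Real.Gamma ((n : ℝ) + 1) = (Nat.factorial n : ℝ) := Real.Gamma_nat_eq_factorial n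
  have h2 := Real.deriv_Gamma_nat n
  have hf : (Nat.factorial n : ℝ) ≠ 0 := by exact_mod_cast (Nat.factorial_pos n).ne'
  rw [psi, h, h2]
  field_simp

lemma psi_mono : MonotoneOn psi (Set.Ioi (0:ℝ)) := by
  have hd : ∀ x ∈ Set.Ioi (0:ℝ), HasDerivAt (Real.log ∘ Real.Gamma) (psi x) x := by
    intro x hx
    have := (gdiff hx).hasDerivAt.log (Real.Gamma_pos_of_pos hx).ne'
    exact this
  have := Real.convexOn_log_Gamma.monotoneOn_deriv
    (fun x hx => (hd x hx).differentiableAt)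
  intro a ha b hb hab
  have h1 := (hd a ha).deriv
  have h2 := (hd b hb).deriv
  rw [← h1, ← h2]
  exact this ha hb hab

lemma tendsto_psi_diff {z : ℝ} (hz : 0 < z) :
    Tendsto (fun N : ℕ => psi (z + N) - psi ((N : ℝ) + 1)) atTop (𝓝 0) := by
  set k := ⌈z⌉₊ with hk
  have hzk : z ≤ k := Nat.le_ceil z
  apply tendsto_of_tendsto_of_tendsto_of_le_of_le' (g := fun N : ℕ => -(1 / (N : ℝ)))
    (h := fun N : ℕ => (k : ℝ) / ((N : ℝ) + 1))
  · rw [show (0:ℝ) = -0 by ring]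
    exact (tendsto_one_div_atTop_nhds_zero_nat).neg
  · apply Tendsto.div_atTop tendsto_const_nhds
    exact tendsto_atTop_add_const_right _ _ tendsto_natCast_atTop_atTop
  · filter_upwards [eventually_ge_atTop 1] with N hN
    have hN0 : (0:ℝ) < N := by exact_mod_cast hN
    have h1 : psi ((N : ℝ) + 1) = psi N + 1 / N := psi_rec hN0
    have h2 : psi (N : ℝ) ≤ psi (z + N) :=
      psi_mono (Set.mem_Ioi.mpr hN0) (Set.mem_Ioi.mpr (by linarith)) (by linarith)
    rw [h1]; linarith
  · filter_upwards with N
    have hN1 : (0:ℝ) < (N : ℝ) + 1 := by positivity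
    have h2 : psi (z + N) ≤ psi (((N : ℝ) + 1) + k) := by
      apply psi_mono (Set.mem_Ioi.mpr (by positivity)) (Set.mem_Ioi.mpr (by positivity))
      linarith
    have h3 : psi (((N : ℝ) + 1) + k) ≤ psi ((N : ℝ) + 1) + (k : ℝ) / ((N : ℝ) + 1) := by
      rw [psi_add_nat hN1 k]
      have : ∑ n ∈ Finset.range k, 1 / ((N : ℝ) + 1 + n) ≤ (k : ℝ) / ((N : ℝ) + 1) := by
        rw [div_eq_mul_one_div]
        calc ∑ n ∈ Finset.range k, 1 / ((N : ℝ) + 1 + n)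
            ≤ ∑ _n ∈ Finset.range k, 1 / ((N : ℝ) + 1) := by
              apply Finset.sum_le_sum
              intro i _
              apply one_div_le_one_div_of_le hN1
              have : (0:ℝ) ≤ i := Nat.cast_nonneg i
              linarith
          _ = (k : ℝ) * (1 / ((N : ℝ) + 1)) := by
              rw [Finset.sum_const, Finset.card_range, nsmul_eq_mul]
      linarith
    linarith

lemma summable_digamma {z : ℝ} (hz : 0 < z) :
    Summable (fun n : ℕ => 1 / ((n : ℝ) + 1) - 1 / (z + n)) := by
  set m := min z 1 with hm
  have hm0 : 0 < m := lt_min hz one_pos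
  have hsq : Summable (fun n : ℕ => 1 / ((n : ℝ) + 1) ^ 2) := by
    have h0 : Summable (fun n : ℕ => 1 / (n : ℝ) ^ 2) :=
      (Real.summable_one_div_nat_pow).2 one_lt_two
    have := (summable_nat_add_iff 1).2 h0
    apply this.congr
    intro n; push_cast; ring
  apply Summable.of_norm_bounded ((hsq.mul_left (|z - 1| / m)))
  intro n
  have hn1 : (0:ℝ) < (n : ℝ) + 1 := by positivity
  have hzn : (0:ℝ) < z + n := by positivity
  have key : ((n : ℝ) + 1) * m ≤ z + n := by
    rcases le_total z 1 with h | h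
    · rw [hm, min_eq_left h]
      have : (0:ℝ) ≤ (n:ℝ) * (1 - z) := by
        apply mul_nonneg (Nat.cast_nonneg n); linarith
      nlinarith
    · rw [hm, min_eq_right h]; linarith
  have hdiff : 1 / ((n : ℝ) + 1) - 1 / (z + n) = (z - 1) / (((n:ℝ) + 1) * (z + n)) := by
    field_simp; ring
  rw [hdiff, Real.norm_eq_abs, abs_div,
    abs_of_pos (show (0:ℝ) < ((n:ℝ) + 1) * (z + n) by positivity)]
  have hb : m * ((n:ℝ) + 1) ^ 2 ≤ ((n : ℝ) + 1) * (z + (n:ℝ)) := by nlinarith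
  calc |z - 1| / (((n:ℝ) + 1) * (z + n)) ≤ |z - 1| / (m * ((n:ℝ) + 1) ^ 2) :=
        div_le_div_of_nonneg_left (abs_nonneg _) (by positivity) hb
    _ = |z - 1| / m * (1 / ((n : ℝ) + 1) ^ 2) := by field_simp

lemma hasSum_digamma {z : ℝ} (hz : 0 < z) :
    HasSum (fun n : ℕ => 1 / ((n : ℝ) + 1) - 1 / (z + n))
      (psi z + eulerMascheroniConstant) := by
  rw [(summable_digamma hz).hasSum_iff_tendsto_nat]
  have key : ∀ N : ℕ, ∑ n ∈ Finset.range N, (1 / ((n : ℝ) + 1) - 1 / (z + n))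
      = (psi z + eulerMascheroniConstant) - (psi (z + N) - psi ((N : ℝ) + 1)) := by
    intro N
    have h1 : (harmonic N : ℝ) = ∑ n ∈ Finset.range N, 1 / ((n : ℝ) + 1) := by
      rw [harmonic]; push_cast; simp_rw [one_div]
    have h2 := psi_add_nat hz N
    have h3 := psi_nat N
    rw [Finset.sum_sub_distrib, ← h1]
    rw [h3] at *
    linarith [h2]
  have h : Tendsto (fun N : ℕ => (psi z + eulerMascheroniConstant) - (psi (z + N) - psi ((N:ℝ) + 1)))
      atTop (𝓝 ((psi z + eulerMascheroniConstant) - 0)) :=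
    tendsto_const_nhds.sub (tendsto_psi_diff hz)
  rw [sub_zero] at h
  exact h.congr (fun N => (key N).symm)

lemma real_zeta_limit :
    Tendsto (fun s : ℝ => (∑' n : ℕ, ((n : ℝ) + 1) ^ (-s)) - 1 / (s - 1)) (𝓝[>] 1)
      (𝓝 eulerMascheroniConstant) := by
  have h := ZetaAsymptotics.tendsto_riemannZeta_sub_one_div_nhds_right
  have h2 := (Complex.continuous_re.tendsto _).comp h
  simp only [Function.comp_def] at h2
  rw [Complex.ofReal_re] at h2
  apply h2.congr'
  filter_upwards [self_mem_nhdsWithin] with s hs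
  have hs1 : 1 < s := hs
  have hz : riemannZeta (s : ℂ) = ((∑' n : ℕ, ((n : ℝ) + 1) ^ (-s) : ℝ) : ℂ) := by
    rw [zeta_eq_tsum_one_div_nat_add_one_cpow (by simpa using hs1), Complex.ofReal_tsum]
    congr 1 with n
    rw [show ((n : ℝ) + 1) ^ (-s) = 1 / ((n : ℝ) + 1) ^ s by
      rw [Real.rpow_neg (by positivity), one_div]]
    rw [Complex.ofReal_div, Complex.ofReal_one, Complex.ofReal_cpow (by positivity)]
    push_cast
    ring_nf
  rw [hz, show (1 : ℂ) / ((s : ℂ) - 1) = ((1 / (s - 1) : ℝ) : ℂ) by push_cast; ring,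
    ← Complex.ofReal_sub, Complex.ofReal_re]

lemma summable_shift {a : ℝ} (ha : 0 < a) {s : ℝ} (hs : 1 < s) :
    Summable (fun n : ℕ => (a + (n : ℝ)) ^ (-s)) := by
  have h := (Real.summable_one_div_nat_add_rpow a s).2 hs
  apply h.congr
  intro n
  have h1 : (0:ℝ) < (n : ℝ) + a := by positivity
  rw [abs_of_pos h1, Real.rpow_neg (by positivity), one_div, add_comm]

lemma tendsto_tsum_diff {z : ℝ} (hz : 0 < z) :
    Tendsto (fun ε : ℝ => ∑' n : ℕ,
        ((z + (n : ℝ)) ^ (-(1 + ε)) - ((n : ℝ) + 1) ^ (-(1 + ε)))) (𝓝[>] 0)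
      (𝓝 (∑' n : ℕ, ((z + (n : ℝ)) ^ (-(1:ℝ)) - ((n : ℝ) + 1) ^ (-(1:ℝ))))) := by
  set m := min z 1 with hm
  have hm0 : 0 < m := lt_min hz one_pos
  have hm1 : m ≤ 1 := min_le_right _ _
  have hmz : m ≤ z := min_le_left _ _
  set C : ℝ := 2 * max 1 m⁻¹ * |z - 1| with hC
  have hC0 : 0 ≤ C := by positivity
  apply tendsto_tsum_of_dominated_convergence
    (bound := fun n : ℕ => C * ((n : ℝ) + m) ^ (-(2:ℝ)))
  · -- summable bound
    apply Summable.mul_left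
    have h := (Real.summable_one_div_nat_add_rpow m 2).2 one_lt_two
    apply h.congr
    intro n
    have h1 : (0:ℝ) < (n : ℝ) + m := by positivity
    rw [abs_of_pos h1, Real.rpow_neg (by positivity), one_div]
  · -- pointwise convergence
    intro n
    have key : ∀ c : ℝ, 0 < c → Tendsto (fun ε : ℝ => c ^ (-(1 + ε))) (𝓝[>] 0)
        (𝓝 (c ^ (-(1:ℝ)))) := by
      intro c hc
      have h1 : Tendsto (fun ε : ℝ => -(1 + ε)) (𝓝[>] 0) (𝓝 (-(1:ℝ))) := by
        have : Tendsto (fun ε : ℝ => -(1 + ε)) (𝓝 0) (𝓝 (-(1 + 0))) := by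
          apply Tendsto.neg; exact tendsto_const_nhds.add tendsto_id
        simpa using this.mono_left nhdsWithin_le_nhds
      exact ((Real.continuousAt_const_rpow hc.ne').tendsto).comp h1
    exact (key _ (by positivity)).sub (key _ (by positivity))
  · -- uniform bound
    filter_upwards [Ioo_mem_nhdsGT_of_mem (Set.left_mem_Ico.mpr one_pos)] with ε hε n
    obtain ⟨hε0, hε1⟩ := hε
    set s : ℝ := 1 + ε with hs
    have hs1 : 1 < s := by simp [hs]; linarith
    have hs2 : s ≤ 2 := by simp [hs]; linarith
    have hnm : (0:ℝ) < (n : ℝ) + m := by positivity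
    -- MVT bound on Ici (n + m)
    have hmvt : ‖(z + (n : ℝ)) ^ (-s) - ((n : ℝ) + 1) ^ (-s)‖
        ≤ s * ((n : ℝ) + m) ^ (-s - 1) * ‖(z + (n : ℝ)) - ((n : ℝ) + 1)‖ := by
      have hconv : Convex ℝ (Set.Ici ((n : ℝ) + m)) := convex_Ici _
      have hder : ∀ t ∈ Set.Ici ((n : ℝ) + m),
          HasDerivWithinAt (fun t : ℝ => t ^ (-s)) (-s * t ^ (-s - 1)) (Set.Ici ((n : ℝ) + m)) t := by
        intro t ht
        have ht0 : (0:ℝ) < t := lt_of_lt_of_le hnm ht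
        exact ((Real.hasDerivAt_rpow_const (Or.inl ht0.ne')).congr_deriv (by ring)).hasDerivWithinAt
      have hbd : ∀ t ∈ Set.Ici ((n : ℝ) + m), ‖-s * t ^ (-s - 1)‖ ≤ s * ((n : ℝ) + m) ^ (-s - 1) := by
        intro t ht
        have ht0 : (0:ℝ) < t := lt_of_lt_of_le hnm ht
        rw [norm_mul, Real.norm_eq_abs, Real.norm_eq_abs, abs_neg,
          abs_of_pos (by linarith), abs_of_pos (Real.rpow_pos_of_pos ht0 _)]
        apply mul_le_mul_of_nonneg_left _ (by linarith)
        exact Real.rpow_le_rpow_of_nonpos hnm ht (by linarith)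
      exact hconv.norm_image_sub_le_of_norm_hasDerivWithin_le hder hbd
        (Set.mem_Ici.mpr (by linarith)) (Set.mem_Ici.mpr (by linarith))
    have hZ : ‖(z + (n : ℝ)) - ((n : ℝ) + 1)‖ = |z - 1| := by
      rw [Real.norm_eq_abs]; congr 1; ring
    rw [hZ] at hmvt
    refine hmvt.trans ?_
    -- now  s * (n+m)^(-s-1) * |z-1| ≤ 2 * max 1 m⁻¹ * |z-1| * (n+m)^(-2)
    have hkey : ((n : ℝ) + m) ^ (-s - 1) ≤ max 1 m⁻¹ * ((n : ℝ) + m) ^ (-(2:ℝ)) := by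
      rcases le_or_gt 1 ((n : ℝ) + m) with h1 | h1
      · calc ((n : ℝ) + m) ^ (-s - 1) ≤ ((n : ℝ) + m) ^ (-(2:ℝ)) :=
            Real.rpow_le_rpow_of_exponent_le h1 (by linarith)
          _ ≤ max 1 m⁻¹ * ((n : ℝ) + m) ^ (-(2:ℝ)) := by
            nlinarith [Real.rpow_pos_of_pos hnm (-(2:ℝ)), le_max_left (1:ℝ) m⁻¹]
      · -- then n = 0 and (n:ℝ) + m = m
        have hn0 : n = 0 := by
          by_contra hne
          have : (1:ℝ) ≤ (n : ℝ) := by exact_mod_cast Nat.one_le_iff_ne_zero.mpr hne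
          linarith
        subst hn0
        simp only [Nat.cast_zero, zero_add] at *
        calc m ^ (-s - 1) ≤ m ^ (-(3:ℝ)) :=
              Real.rpow_le_rpow_of_exponent_ge hm0 hm1 (by linarith)
          _ = m⁻¹ * m ^ (-(2:ℝ)) := by
              rw [show (-(3:ℝ)) = (-1) + (-2) by norm_num, Real.rpow_add hm0,
                Real.rpow_neg_one]
          _ ≤ max 1 m⁻¹ * m ^ (-(2:ℝ)) := by
              nlinarith [Real.rpow_pos_of_pos hm0 (-(2:ℝ)), le_max_right (1:ℝ) m⁻¹]
    calc s * ((n : ℝ) + m) ^ (-s - 1) * |z - 1|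
        ≤ 2 * (max 1 m⁻¹ * ((n : ℝ) + m) ^ (-(2:ℝ))) * |z - 1| := by
          apply mul_le_mul_of_nonneg_right _ (abs_nonneg _)
          have h0 : (0:ℝ) ≤ ((n : ℝ) + m) ^ (-s - 1) := (Real.rpow_pos_of_pos hnm _).le
          nlinarith [Real.rpow_pos_of_pos hnm (-(2:ℝ)), le_max_left (1:ℝ) m⁻¹]
      _ = C * ((n : ℝ) + m) ^ (-(2:ℝ)) := by rw [hC]; ring

end HurwitzDigammaAux

open HurwitzDigammaAux Real in
/-- For real `z > 0`, `lim_{ε→0⁺} ( Σ_{n=0}^∞ (z+n)^{−(1+ε)} − 1/ε ) = −Γ′(z)/Γ(z)`. -/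
theorem hurwitzZeta_sub_pole_tendsto_neg_digamma (z : ℝ) (hz : 0 < z) :
    Tendsto (fun ε : ℝ => (∑' n : ℕ, (z + (n : ℝ)) ^ (-(1 + ε))) - 1 / ε)
      (𝓝[>] 0) (𝓝 (-(deriv Real.Gamma z / Real.Gamma z))) := by
  have hsumB : ∀ {s : ℝ}, 1 < s → Summable (fun n : ℕ => ((n : ℝ) + 1) ^ (-s)) := by
    intro s hs
    exact (summable_shift one_pos hs).congr (fun n => by rw [add_comm])
  -- value of the limit tsum
  have hval : (∑' n : ℕ, ((z + (n : ℝ)) ^ (-(1:ℝ)) - ((n : ℝ) + 1) ^ (-(1:ℝ))))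
      = -(psi z + eulerMascheroniConstant) := by
    have h := (hasSum_digamma hz).neg
    have h2 : (fun n : ℕ => -(1 / ((n : ℝ) + 1) - 1 / (z + n)))
        = (fun n : ℕ => ((z + (n : ℝ)) ^ (-(1:ℝ)) - ((n : ℝ) + 1) ^ (-(1:ℝ)))) := by
      funext n
      rw [Real.rpow_neg_one, Real.rpow_neg_one, ← one_div, ← one_div]
      ring
    rw [h2] at h
    exact h.tsum_eq
  -- second summand limit
  have h1p : Tendsto (fun ε : ℝ => 1 + ε) (𝓝[>] 0) (𝓝[>] 1) := by
    apply tendsto_nhdsWithin_of_tendsto_nhds_of_eventually_within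
    · simpa using (tendsto_const_nhds.add (tendsto_id.mono_left nhdsWithin_le_nhds) :
        Tendsto (fun ε : ℝ => 1 + ε) (𝓝[>] 0) (𝓝 (1 + 0)))
    · filter_upwards [self_mem_nhdsWithin] with ε hε
      simp only [Set.mem_Ioi] at *
      linarith
  have hB : Tendsto (fun ε : ℝ => (∑' n : ℕ, ((n : ℝ) + 1) ^ (-(1 + ε))) - 1 / ε)
      (𝓝[>] 0) (𝓝 eulerMascheroniConstant) := by
    have := real_zeta_limit.comp h1p
    apply this.congr
    intro ε
    simp only [Function.comp_apply, add_sub_cancel_left]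
  -- combine
  have hsum := (tendsto_tsum_diff hz).add hB
  rw [hval] at hsum
  have hlim : -(psi z + eulerMascheroniConstant) + eulerMascheroniConstant = -(psi z) := by ring
  rw [hlim] at hsum
  apply hsum.congr'
  filter_upwards [self_mem_nhdsWithin] with ε hε
  have hε0 : 0 < ε := hε
  have hs1 : 1 < 1 + ε := by linarith
  have hA : Summable (fun n : ℕ => (z + (n : ℝ)) ^ (-(1 + ε))) := summable_shift hz hs1
  rw [Summable.tsum_sub hA (hsumB hs1)]
  ring
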